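/- Let X be a Hausdorff topological space and a : ℝ → X a continuous map with a(t + 2) = a(t) for all t ∈ ℝ, whose restriction to the interval [0, 2) is injective (a nontrivial simple loop). Then there is no continuous map s : [0, 1] → X such that s(t) ∈ {a(t), a(t+1)} for every t ∈ [0, 1], s(0) = a(0), and s(1) = s(0). -/

import Mathlib

/-- **No continuous selection of a label along a simple loop.**
If `a : ℝ → X` is a continuous `2`-periodic map into a Hausdorff space whose restriction to
`[0, 2)` is injective (a nontrivial simple loop), then there is no continuous
`s : [0, 1] → X` with `s t ∈ {a t, a (t+1)}` for every `t ∈ [0, 1]`, `s 0 = a 0`, and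
`s 1 = s 0`. -/
theorem no_continuous_selection_along_simple_loop
    {X : Type*} [TopologicalSpace X] [T2Space X]
    (a : ℝ → X) (ha : Continuous a)
    (hper : ∀ t : ℝ, a (t + 2) = a t)
    (hinj : Set.InjOn a (Set.Ico (0 : ℝ) 2)) :
    ¬ ∃ s : ℝ → X, ContinuousOn s (Set.Icc 0 1) ∧
      (∀ t ∈ Set.Icc (0 : ℝ) 1, s t = a t ∨ s t = a (t + 1)) ∧
      s 0 = a 0 ∧ s 1 = s 0 := by
  rintro ⟨s, hs, hsel, h0, h1⟩
  have ha20 : a 2 = a 0 := by simpa using hper 0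
  have ha10 : a 1 ≠ a 0 := fun h => by
    have := hinj (by norm_num : (1:ℝ) ∈ Set.Ico (0:ℝ) 2)
      (by norm_num : (0:ℝ) ∈ Set.Ico (0:ℝ) 2) h
    norm_num at this
  -- key: a t ≠ a (t+1) on [0,1]
  have hne : ∀ t ∈ Set.Icc (0:ℝ) 1, a t ≠ a (t + 1) := by
    intro t ht h
    obtain ⟨ht0, ht1⟩ := ht
    rcases lt_or_eq_of_le ht1 with h1' | h1'
    · have := hinj ⟨ht0, by linarith⟩ ⟨by linarith, by linarith⟩ h
      linarith
    · subst h1'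
      rw [show (1:ℝ) + 1 = 2 by norm_num, ha20] at h
      exact ha10 h
  -- the two closed sets
  set A := Set.Icc (0:ℝ) 1 ∩ {t | s t = a t} with hA
  set B := Set.Icc (0:ℝ) 1 ∩ {t | s t = a (t + 1)} with hB
  have hAc : IsClosed A := by
    have : A = Set.Icc (0:ℝ) 1 ∩ (fun t => (s t, a t)) ⁻¹' Set.diagonal X := by
      ext t; simp [hA, Set.diagonal, eq_comm]
    rw [this]
    exact (hs.prodMk ha.continuousOn).preimage_isClosed_of_isClosed isClosed_Icc
      isClosed_diagonal
  have hBc : IsClosed B := by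
    have : B = Set.Icc (0:ℝ) 1 ∩ (fun t => (s t, a (t + 1))) ⁻¹' Set.diagonal X := by
      ext t; simp [hB, Set.diagonal, eq_comm]
    rw [this]
    exact (hs.prodMk ((ha.comp (continuous_add_right 1)).continuousOn)).preimage_isClosed_of_isClosed
      isClosed_Icc isClosed_diagonal
  have hcov : Set.Icc (0:ℝ) 1 ⊆ A ∪ B := by
    intro t ht
    rcases hsel t ht with h | h
    · exact Or.inl ⟨ht, h⟩
    · exact Or.inr ⟨ht, h⟩
  have hAne : (Set.Icc (0:ℝ) 1 ∩ A).Nonempty :=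
    ⟨0, by norm_num, by norm_num, h0⟩
  have hBne : (Set.Icc (0:ℝ) 1 ∩ B).Nonempty := by
    refine ⟨1, by norm_num, by norm_num, ?_⟩
    show s 1 = a (1 + 1)
    rw [show (1:ℝ) + 1 = 2 by norm_num, ha20, h1, h0]
  obtain ⟨t, htI, ⟨ht1, hsa⟩, ⟨_, hsb⟩⟩ :=
    (isPreconnected_closed_iff.mp isPreconnected_Icc) A B hAc hBc hcov hAne hBne
  exact hne t ht1 (hsa ▸ hsb)
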